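/- For every integer m ≥ 1 and f = x·(x^{2m} + (xz + y^2)^m) in C[x,y,z], the partial derivative f_z divides the polynomial g = −2m·x·(xz + y^2)^{m−1}·f_x + y^{2m−1}·f_y in C[x,y,z]. -/

import Mathlib

open MvPolynomial Finset

theorem stmt3 (m : ℕ) (hm : 1 ≤ m) :
    let f : MvPolynomial (Fin 3) ℂ := X 0 * (X 0 ^ (2 * m) + (X 0 * X 2 + X 1 ^ 2) ^ m)
    pderiv 2 f ∣
      -(2 * (m : MvPolynomial (Fin 3) ℂ)) * X 0 * (X 0 * X 2 + X 1 ^ 2) ^ (m - 1) * pderiv 0 f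
        + X 1 ^ (2 * m - 1) * pderiv 1 f := by
  obtain ⟨n, rfl⟩ : ∃ n, m = n + 1 := ⟨m - 1, (Nat.succ_pred_eq_of_pos hm).symm⟩
  intro f
  set u : MvPolynomial (Fin 3) ℂ := X 0 * X 2 + X 1 ^ 2 with hu
  set S : MvPolynomial (Fin 3) ℂ := ∑ i ∈ range (n + 1), u ^ i * (X 1 ^ 2) ^ (n - i) with hSdef
  have hS : S * (X 0 * X 2) = u ^ (n + 1) - (X 1 ^ 2) ^ (n + 1) := by
    have := geom_sum₂_mul (R := MvPolynomial (Fin 3) ℂ) u (X 1 ^ 2) (n + 1)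
    simpa [hu, add_sub_cancel_right] using this
  refine ⟨-2 * (((2 * n + 3 : ℕ) : MvPolynomial (Fin 3) ℂ) * X 0 ^ (2 * n + 1)
      + ((n + 1 : ℕ) : MvPolynomial (Fin 3) ℂ) * X 2 * u ^ n + X 2 * S), ?_⟩
  have h2 : pderiv 2 f = ((n + 1 : ℕ) : MvPolynomial (Fin 3) ℂ) * X 0 ^ 2 * u ^ n := by
    simp [f, hu, pderiv_mul, pderiv_pow, pderiv_X]
    ring
  have h0 : pderiv 0 f = ((2 * n + 3 : ℕ) : MvPolynomial (Fin 3) ℂ) * X 0 ^ (2 * (n+1))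
      + u ^ (n + 1) + ((n + 1 : ℕ) : MvPolynomial (Fin 3) ℂ) * X 0 * X 2 * u ^ n := by
    simp [f, hu, pderiv_mul, pderiv_pow, pderiv_X]
    rw [show 2 * (n + 1) - 1 = n * 2 + 1 by omega]
    ring
  have h1 : pderiv 1 f = 2 * ((n + 1 : ℕ) : MvPolynomial (Fin 3) ℂ) * X 0 * X 1 * u ^ n := by
    simp [f, hu, pderiv_mul, pderiv_pow, pderiv_X]
    ring
  rw [h0, h1, h2]
  have hmm : (n + 1 : ℕ) - 1 = n := rfl
  have hmm2 : 2 * (n + 1) - 1 = 2 * n + 1 := by omega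
  rw [hmm, hmm2]
  push_cast
  linear_combination (2 * ((n : MvPolynomial (Fin 3) ℂ) + 1) * X 0 * u ^ n) * hS
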